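/- Let d, n ≥ 1, M ≥ 0, let each f_i : ℝ^d → ℝ be convex and M-Lipschitz, let r > 0, χ ≥ 1, and let K, T ≥ 1 be integers. Set r_x = 2r/3 and r_yz = 3/r (so r_x + 1/r_yz = r). Let x* be the unique minimizer of p. Suppose x_a = (x_{a,1},…,x_{a,n}), y_a ∈ (ℝ^d)^n and z_a ∈ L⊥ satisfy, for all x, y ∈ (ℝ^d)^n and all z ∈ L⊥: Q(x_a, y, z) − Q(x, y_a, z_a) ≤ (2/K²)·(r‖x‖² + (18/r)‖y‖² + (45χ²/r)‖z‖²) + 72nM²/(rKT). Then x_o = (1/n)∑_{i=1}^n x_{a,i} satisfies p(x_o) − p(x*) ≤ 212χ²M²/(rK²) + 72M²/(rKT) + (12/K²)·(1386χ²M²/(rK²) + 72M²/(rKT)). -/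

import Mathlib

open scoped BigOperators RealInnerProductSpace

set_option maxHeartbeats 2000000
noncomputable section

/-- `(ℝ^d)^n` with the Euclidean (ℓ²-product) norm. -/
abbrev Vec (d n : ℕ) := PiLp 2 (fun _ : Fin n => EuclideanSpace ℝ (Fin d))

lemma exists_subgrad {E : Type*} [NormedAddCommGroup E] [InnerProductSpace ℝ E]
    [CompleteSpace E] (M : ℝ) (hM : 0 ≤ M) (f : E → ℝ)
    (hconv : ConvexOn ℝ Set.univ f) (hlip : ∀ x x', |f x - f x'| ≤ M * ‖x - x'‖)
    (x₀ : E) :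
    ∃ g : E, ‖g‖ ≤ M ∧ ∀ x, f x₀ + ⟪g, x - x₀⟫ ≤ f x := by
  classical
  have hcont : Continuous f := by
    have : LipschitzWith (Real.toNNReal M) f := by
      refine LipschitzWith.of_dist_le_mul fun x y => ?_
      have h := hlip x y
      rw [Real.dist_eq, dist_eq_norm]
      calc |f x - f y| ≤ M * ‖x - y‖ := h
        _ ≤ Real.toNNReal M * ‖x - y‖ := by
            gcongr; exact Real.le_coe_toNNReal M
    exact this.continuous
  set S : Set (E × ℝ) := {q | f q.1 < q.2} with hS
  have hSopen : IsOpen S := by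
    have : IsOpen {q : E × ℝ | f q.1 - q.2 < 0} :=
      isOpen_lt (by fun_prop) continuous_const
    convert this using 1
    ext q; simp [hS, sub_neg]
  have hSconv : Convex ℝ S := by
    rintro ⟨x, s⟩ hx ⟨y, t⟩ hy a b ha hb hab
    simp only [hS, Set.mem_setOf_eq] at hx hy ⊢
    have h := hconv.2 (Set.mem_univ x) (Set.mem_univ y) ha hb hab
    simp only [smul_eq_mul] at h
    calc f (a • x + b • y) ≤ a * f x + b * f y := h
      _ < a * s + b * t := by
          rcases ha.lt_or_eq with ha' | ha'
          · rcases hb.lt_or_eq with hb' | hb'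
            · nlinarith
            · have : a = 1 := by rw [← hb'] at hab; linarith
              rw [← hb', this]; simpa using hx
          · have : b = 1 := by rw [← ha'] at hab; linarith
            rw [← ha', this]; simpa using hy
  have hx₀ : ((x₀, f x₀) : E × ℝ) ∉ S := by simp [hS]
  obtain ⟨ℓ, hℓ⟩ := geometric_hahn_banach_open_point hSconv hSopen hx₀
  set c : ℝ := ℓ (0, 1) with hc
  have hdecomp : ∀ (x : E) (t : ℝ), ℓ (x, t) = ℓ (x, 0) + t * c := by
    intro x t
    have h : ((x, t) : E × ℝ) = (x, 0) + t • ((0 : E), (1 : ℝ)) := by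
      simp [Prod.ext_iff]
    rw [h, map_add, map_smul, smul_eq_mul, hc]
  have hcneg : c < 0 := by
    have h1 : ((x₀, f x₀ + 1) : E × ℝ) ∈ S := by simp [hS]
    have h2 := hℓ _ h1
    rw [hdecomp x₀ (f x₀ + 1), hdecomp x₀ (f x₀)] at h2
    linarith
  have hkey : ∀ x : E, ℓ (x, 0) + f x * c ≤ ℓ (x₀, 0) + f x₀ * c := by
    intro x
    by_contra h
    push_neg at h
    set A : ℝ := ℓ (x, 0) + f x * c - (ℓ (x₀, 0) + f x₀ * c) with hA
    have hA0 : 0 < A := by simp only [hA]; linarith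
    set ε : ℝ := A / (-c) with hε
    have hε0 : 0 < ε := div_pos hA0 (by linarith)
    have hmem : ((x, f x + ε) : E × ℝ) ∈ S := by simp [hS, hε0]
    have h2 := hℓ _ hmem
    rw [hdecomp x (f x + ε), hdecomp x₀ (f x₀)] at h2
    have hcne' : -c ≠ 0 := by intro h'; rw [neg_eq_zero] at h'; exact absurd h' (ne_of_lt hcneg)
    have hce : ε * c = -A := by
      rw [hε, div_mul_eq_mul_div, div_neg, mul_div_assoc, div_self (ne_of_lt hcneg), mul_one]
    nlinarith [hce, h2]
  set g : E := (-c⁻¹) • (InnerProductSpace.toDual ℝ E).symm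
      (ℓ.comp (ContinuousLinearMap.inl ℝ E ℝ)) with hg
  have hginner : ∀ x : E, ⟪g, x⟫ = -c⁻¹ * ℓ (x, 0) := by
    intro x
    rw [hg, real_inner_smul_left, InnerProductSpace.toDual_symm_apply]
    rfl
  have hsub : ∀ x, f x₀ + ⟪g, x - x₀⟫ ≤ f x := by
    intro x
    have h1 := hkey x
    have h2 : ⟪g, x - x₀⟫ = -c⁻¹ * (ℓ (x - x₀, 0)) := hginner _
    have h3 : ℓ ((x - x₀ : E), (0:ℝ)) = ℓ (x, 0) - ℓ (x₀, 0) := by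
      have : ((x - x₀ : E), (0:ℝ)) = ((x, (0:ℝ)) : E × ℝ) - (x₀, 0) := by
        simp [Prod.ext_iff]
      rw [this, map_sub]
    rw [h2, h3]
    have hcne : c ≠ 0 := ne_of_lt hcneg
    have hci : c⁻¹ < 0 := inv_lt_zero.mpr hcneg
    have h4 : (f x - f x₀) * c ≤ ℓ (x₀, 0) - ℓ (x, 0) := by linarith
    have h5 := mul_le_mul_of_nonpos_left h4 (le_of_lt hci)
    have h6 : c⁻¹ * ((f x - f x₀) * c) = f x - f x₀ := by field_simp
    rw [h6] at h5
    linarith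
  refine ⟨g, ?_, hsub⟩
  have h1 := hsub (x₀ + g)
  have h2 : ⟪g, (x₀ + g) - x₀⟫ = ‖g‖^2 := by
    simp [real_inner_self_eq_norm_sq]
  have h3 := hlip (x₀ + g) x₀
  have h4 : ‖(x₀ + g) - x₀‖ = ‖g‖ := by simp
  rw [h2] at h1
  rw [h4] at h3
  have h5 : ‖g‖^2 ≤ M * ‖g‖ := by
    have := (abs_le.mp h3).2
    nlinarith [this, h1]
  by_contra hgt
  push_neg at hgt
  have hg0 : (0:ℝ) < ‖g‖ := lt_of_le_of_lt hM hgt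
  nlinarith [h5, mul_lt_mul_of_pos_right hgt hg0]

lemma norm_sum_sq_le_card {E : Type*} [SeminormedAddCommGroup E] {n : ℕ} (a : Fin n → E) :
    ‖∑ i, a i‖^2 ≤ (n:ℝ) * ∑ i, ‖a i‖^2 := by
  have h1 : ‖∑ i, a i‖ ≤ ∑ i, ‖a i‖ := norm_sum_le _ _
  have h2 : (∑ i, ‖a i‖)^2 ≤ (n:ℝ) * ∑ i, ‖a i‖^2 := by
    have h := Finset.sum_mul_sq_le_sq_mul_sq Finset.univ (fun _ : Fin n => (1:ℝ))
      (fun i => ‖a i‖)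
    simpa [Finset.card_univ] using h
  calc ‖∑ i, a i‖^2 ≤ (∑ i, ‖a i‖)^2 := by
        apply pow_le_pow_left₀ (norm_nonneg _) h1
    _ ≤ (n:ℝ) * ∑ i, ‖a i‖^2 := h2

lemma variance_bound {E : Type*} [NormedAddCommGroup E] [InnerProductSpace ℝ E]
    {n : ℕ} (g : Fin n → E) (gb : E) (M : ℝ)
    (hsgb : (n:ℝ) • gb = ∑ i, g i) (hgM : ∀ i, ‖g i‖ ≤ M) :
    ∑ i, ‖g i - gb‖^2 ≤ (n:ℝ) * M^2 := by
  have hexp : ∀ i, ‖g i - gb‖^2 = ‖g i‖^2 - 2*⟪g i, gb⟫ + ‖gb‖^2 := by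
    intro i; rw [norm_sub_sq_real]
  have hs : ∑ i, ‖g i - gb‖^2
      = (∑ i, ‖g i‖^2) - 2*⟪∑ i, g i, gb⟫ + (n:ℝ)*‖gb‖^2 := by
    rw [sum_inner]
    calc ∑ i, ‖g i - gb‖^2 = ∑ i, (‖g i‖^2 - 2*⟪g i, gb⟫ + ‖gb‖^2) :=
          Finset.sum_congr rfl (fun i _ => hexp i)
      _ = (∑ i, ‖g i‖^2) - 2*(∑ i, ⟪g i, gb⟫) + (n:ℝ)*‖gb‖^2 := by
          rw [Finset.sum_add_distrib, Finset.sum_sub_distrib, Finset.sum_const,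
            Finset.card_univ, Fintype.card_fin, nsmul_eq_mul, Finset.mul_sum]
  have hinner : ⟪∑ i, g i, gb⟫ = (n:ℝ)*‖gb‖^2 := by
    rw [← hsgb, real_inner_smul_left, real_inner_self_eq_norm_sq]
  have hsum : ∑ i, ‖g i‖^2 ≤ (n:ℝ)*M^2 := by
    calc ∑ i, ‖g i‖^2 ≤ ∑ _i : Fin n, M^2 := by
          apply Finset.sum_le_sum
          intro i _
          have := hgM i
          nlinarith [norm_nonneg (g i)]
      _ = (n:ℝ)*M^2 := by
          rw [Finset.sum_const, Finset.card_univ, Fintype.card_fin, nsmul_eq_mul]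
  rw [hs, hinner]
  nlinarith [sq_nonneg ‖gb‖, Nat.cast_nonneg (α := ℝ) n]

lemma nonneg_of_forall_small (A C : ℝ) (hC0 : 0 ≤ C)
    (h : ∀ t:ℝ, 0 < t → t ≤ 1 → 0 ≤ t*(A + t*C)) : 0 ≤ A := by
  by_contra hneg
  push_neg at hneg
  have h1 : 0 < -A / (C+1) := div_pos (by linarith) (by linarith)
  have h2 : 0 < min 1 (-A/(C+1)) := lt_min one_pos h1
  have h4 := h _ h2 (min_le_left _ _)
  have h5 : (min 1 (-A/(C+1)))*C ≤ (-A/(C+1))*C :=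
    mul_le_mul_of_nonneg_right (min_le_right _ _) hC0
  have h6 : (-A/(C+1))*C < -A := by
    rw [div_mul_eq_mul_div, div_lt_iff₀ (by linarith : (0:ℝ) < C+1)]
    nlinarith
  have h7 : 0 < -(A + (min 1 (-A/(C+1)))*C) := by linarith
  nlinarith [h4, mul_pos h2 h7]

lemma sq_bound_aux (r M N : ℝ) (hr : 0 < r) (h5 : (r/2)*N^2 ≤ M*N) : r^2*N^2 ≤ 4*M^2 := by
  nlinarith [mul_le_mul_of_nonneg_left h5 (le_of_lt hr), sq_nonneg (r*N - 2*M)]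

lemma coef_aux (k t c : ℝ) (hk : 1 ≤ k) (ht : 1 ≤ t) (hc : 1 ≤ c) :
    864*k ≤ 46*c*k^2*t + 13032*c*t := by
  have h1 : k^2 ≤ c*k^2*t := by
    nlinarith [mul_nonneg (mul_nonneg (by linarith : (0:ℝ) ≤ c - 1) (sq_nonneg k))
      (by linarith : (0:ℝ) ≤ t), mul_nonneg (sq_nonneg k) (by linarith : (0:ℝ) ≤ t - 1)]
  have h2 : (1:ℝ) ≤ c*t := by nlinarith
  nlinarith [sq_nonneg (46*k - 432), h1, h2]

lemma endgame_aux (r χ M k τ D W X O : ℝ)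
    (hr : 0 < r) (hχ2 : 1 ≤ χ^2) (hk1 : 1 ≤ k) (hτ1 : 1 ≤ τ)
    (hM2 : 0 ≤ M^2) (hW : 0 ≤ W) (hX : 0 ≤ X) (hO : 0 ≤ O)
    (hB2 : D ≤ 2/k^2*(r*X + 18/r*(M^2 + (r/3)^2*O) + 45*χ^2/r*M^2) + 72*M^2/(r*k*τ))
    (hB1 : D - r/6*W ≤ 2/k^2*(r*X + 18/r*(M^2 + (r/3)^2*X) + 45*χ^2/r*M^2) + 72*M^2/(r*k*τ))
    (hD0 : r/2*W ≤ D)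
    (hxs2 : r^2*X ≤ 4*M^2)
    (hOb : O ≤ 2*W + 2*X) :
    D ≤ 212*χ^2*M^2/(r*k^2) + 72*M^2/(r*k*τ)
      + 12/k^2*(1386*χ^2*M^2/(r*k^2) + 72*M^2/(r*k*τ)) := by
  have hk0 : (0:ℝ) < k := by linarith
  have hτ0 : (0:ℝ) < τ := by linarith
  have hk' : k ≠ 0 := ne_of_gt hk0
  have hτ' : τ ≠ 0 := ne_of_gt hτ0
  have hr' : r ≠ 0 := ne_of_gt hr
  have P2 : r*k^4*τ*D ≤ 2*r^2*k^2*τ*X + 36*k^2*τ*M^2 + 4*r^2*k^2*τ*O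
      + 90*χ^2*k^2*τ*M^2 + 72*k^3*M^2 := by
    have h := mul_le_mul_of_nonneg_left hB2 (show (0:ℝ) ≤ r*k^4*τ by positivity)
    have e : r*k^4*τ*(2/k^2*(r*X + 18/r*(M^2 + (r/3)^2*O) + 45*χ^2/r*M^2) + 72*M^2/(r*k*τ))
        = 2*r^2*k^2*τ*X + 36*k^2*τ*M^2 + 4*r^2*k^2*τ*O + 90*χ^2*k^2*τ*M^2 + 72*k^3*M^2 := by
      field_simp
      ring
    linarith [h, e]
  have P1 : r*k^2*τ*D - (1/6)*r^2*k^2*τ*W ≤ 6*r^2*τ*X + 36*τ*M^2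
      + 90*χ^2*τ*M^2 + 72*k*M^2 := by
    have h := mul_le_mul_of_nonneg_left hB1 (show (0:ℝ) ≤ r*k^2*τ by positivity)
    have e : r*k^2*τ*(2/k^2*(r*X + 18/r*(M^2 + (r/3)^2*X) + 45*χ^2/r*M^2) + 72*M^2/(r*k*τ))
        = 6*r^2*τ*X + 36*τ*M^2 + 90*χ^2*τ*M^2 + 72*k*M^2 := by
      field_simp
      ring
    have e2 : r*k^2*τ*(D - r/6*W) = r*k^2*τ*D - (1/6)*r^2*k^2*τ*W := by ring
    linarith [h, e, e2]
  have PD0 : (1/2)*r^2*k^2*τ*W ≤ r*k^2*τ*D := by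
    have h := mul_le_mul_of_nonneg_left hD0 (show (0:ℝ) ≤ r*k^2*τ by positivity)
    have e : r*k^2*τ*(r/2*W) = (1/2)*r^2*k^2*τ*W := by ring
    linarith [h, e]
  have PO : r^2*k^2*τ*O ≤ 2*r^2*k^2*τ*W + 2*r^2*k^2*τ*X := by
    have h := mul_le_mul_of_nonneg_left hOb (show (0:ℝ) ≤ r^2*k^2*τ by positivity)
    linarith [h]
  have PX1 : r^2*τ*X ≤ 4*τ*M^2 := by
    have h := mul_le_mul_of_nonneg_left hxs2 (le_of_lt hτ0)
    linarith [h]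
  have PX2 : r^2*k^2*τ*X ≤ 4*k^2*τ*M^2 := by
    have h := mul_le_mul_of_nonneg_left hxs2 (show (0:ℝ) ≤ k^2*τ by positivity)
    linarith [h]
  have Pc1 : τ*M^2 ≤ χ^2*τ*M^2 := by
    have h := mul_le_mul_of_nonneg_left hχ2 (show (0:ℝ) ≤ τ*M^2 by positivity)
    linarith [h]
  have Pc2 : k^2*τ*M^2 ≤ χ^2*k^2*τ*M^2 := by
    have h := mul_le_mul_of_nonneg_left hχ2 (show (0:ℝ) ≤ k^2*τ*M^2 by positivity)
    linarith [h]
  have Pcoef : 864*k*M^2 ≤ 46*χ^2*k^2*τ*M^2 + 13032*χ^2*τ*M^2 := by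
    have h := mul_le_mul_of_nonneg_left (coef_aux k τ (χ^2) hk1 hτ1 hχ2) hM2
    linarith [h]
  have PG : r*k^4*τ*D ≤ 212*χ^2*k^2*τ*M^2 + 72*k^3*M^2 + 16632*χ^2*τ*M^2 + 864*k*M^2 := by
    linarith [P2, P1, PD0, PO, PX1, PX2, Pc1, Pc2, Pcoef]
  have hpos : (0:ℝ) < r*k^4*τ := by positivity
  have h2 : D ≤ (212*χ^2*k^2*τ*M^2 + 72*k^3*M^2 + 16632*χ^2*τ*M^2 + 864*k*M^2)/(r*k^4*τ) := by
    rw [le_div_iff₀ hpos]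
    linarith [PG]
  have e2 : (212*χ^2*k^2*τ*M^2 + 72*k^3*M^2 + 16632*χ^2*τ*M^2 + 864*k*M^2)/(r*k^4*τ)
      = 212*χ^2*M^2/(r*k^2) + 72*M^2/(r*k*τ)
        + 12/k^2*(1386*χ^2*M^2/(r*k^2) + 72*M^2/(r*k*τ)) := by
    field_simp
    ring
  linarith [h2, e2]

lemma norm_add_sq_le_two {E : Type*} [NormedAddCommGroup E] [InnerProductSpace ℝ E] (a b : E) :
    ‖a + b‖^2 ≤ 2*‖a‖^2 + 2*‖b‖^2 := by
  nlinarith [norm_add_sq_real a b, real_inner_le_norm a b, sq_nonneg (‖a‖ - ‖b‖),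
    norm_nonneg a, norm_nonneg b]

theorem stmt18 (d n : ℕ) (hd : 1 ≤ d) (hn : 1 ≤ n) (M : ℝ) (hM : 0 ≤ M)
    (f : Fin n → EuclideanSpace ℝ (Fin d) → ℝ)
    (hconv : ∀ i, ConvexOn ℝ Set.univ (f i))
    (hlip : ∀ i x x', |f i x - f i x'| ≤ M * ‖x - x'‖)
    (r χ : ℝ) (hr : 0 < r) (hχ : 1 ≤ χ)
    (K T : ℕ) (hK : 1 ≤ K) (hT : 1 ≤ T)
    (rx ryz : ℝ) (hrx : rx = 2 * r / 3) (hryz : ryz = 3 / r)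
    (p : EuclideanSpace ℝ (Fin d) → ℝ)
    (hp : ∀ x, p x = (n : ℝ)⁻¹ * (∑ i, f i x) + (r / 2) * ‖x‖ ^ 2)
    (F : Vec d n → ℝ) (hF : ∀ x, F x = (∑ i, f i (x i)) + (rx / 2) * ‖x‖ ^ 2)
    (G : Vec d n → Vec d n → ℝ) (hG : ∀ y z, G y z = (ryz / 2) * ‖y + z‖ ^ 2)
    (Q : Vec d n → Vec d n → Vec d n → ℝ)
    (hQ : ∀ x y z, Q x y z = F x - ⟪y, x⟫ - G y z)
    (xstar : EuclideanSpace ℝ (Fin d))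
    (hmin : ∀ x, p xstar ≤ p x)
    (huniq : ∀ x, (∀ x', p x ≤ p x') → x = xstar)
    (xa ya za : Vec d n) (hza : (∑ i, za i) = 0)
    (hkey : ∀ x y z : Vec d n, (∑ i, z i) = 0 →
      Q xa y z - Q x ya za ≤
        (2 / (K : ℝ) ^ 2) * (r * ‖x‖ ^ 2 + (18 / r) * ‖y‖ ^ 2 + (45 * χ ^ 2 / r) * ‖z‖ ^ 2)
          + 72 * n * M ^ 2 / (r * K * T)) :
    p ((n : ℝ)⁻¹ • ∑ i, xa i) - p xstar ≤
      212 * χ ^ 2 * M ^ 2 / (r * K ^ 2) + 72 * M ^ 2 / (r * K * T)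
        + (12 / (K : ℝ) ^ 2) *
          (1386 * χ ^ 2 * M ^ 2 / (r * K ^ 2) + 72 * M ^ 2 / (r * K * T)) := by
  subst hrx hryz
  have hn0 : (0:ℝ) < n := by exact_mod_cast hn
  have hn0' : (n:ℝ) ≠ 0 := ne_of_gt hn0
  have hr' : r ≠ 0 := ne_of_gt hr
  have hk0 : (0:ℝ) < (K:ℝ) := by exact_mod_cast hK
  have hk0' : (K:ℝ) ≠ 0 := ne_of_gt hk0
  have ht0 : (0:ℝ) < (T:ℝ) := by exact_mod_cast hT
  have ht0' : (T:ℝ) ≠ 0 := ne_of_gt ht0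
  have hk1 : (1:ℝ) ≤ (K:ℝ) := by exact_mod_cast hK
  have ht1 : (1:ℝ) ≤ (T:ℝ) := by exact_mod_cast hT
  have hχ2 : (1:ℝ) ≤ χ^2 := by nlinarith
  set xo : EuclideanSpace ℝ (Fin d) := (n:ℝ)⁻¹ • ∑ i, xa i with hxo
  choose g hgM hgsub using fun i => exists_subgrad M hM (f i) (hconv i) (hlip i) xo
  set gb : EuclideanSpace ℝ (Fin d) := (n:ℝ)⁻¹ • ∑ i, g i with hgb
  have hsgb : (n:ℝ) • gb = ∑ i, g i := by
    rw [hgb, smul_smul, mul_inv_cancel₀ hn0', one_smul]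
  have hsxa : (n:ℝ) • xo = ∑ i, xa i := by
    rw [hxo, smul_smul, mul_inv_cancel₀ hn0', one_smul]
  -- the main gap bound
  have hmain : ∀ v c : EuclideanSpace ℝ (Fin d),
      (∑ i, f i xo) + (n:ℝ) * ((2*r/3/2) * ‖xo‖^2 - ⟪v, xo⟫ - (3/r/2) * ‖v‖^2)
        - (n:ℝ) * p c ≤
      (2/(K:ℝ)^2) * (r * ((n:ℝ) * ‖c‖^2) + (18/r) * ((n:ℝ)*M^2 + (n:ℝ)*‖v‖^2)
        + (45*χ^2/r) * ((n:ℝ)*M^2)) + 72*n*M^2/(r*K*T) := by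
    intro v c
    set yv : Vec d n := WithLp.toLp 2 (fun i => g i - gb + v) with hyv
    set zv : Vec d n := WithLp.toLp 2 (fun i => gb - g i) with hzv
    set xc : Vec d n := WithLp.toLp 2 (fun _ => c) with hxc
    set u : EuclideanSpace ℝ (Fin d) := (n:ℝ)⁻¹ • ∑ i, ya i with hu
    have hsu : (n:ℝ) • u = ∑ i, ya i := by
      rw [hu, smul_smul, mul_inv_cancel₀ hn0', one_smul]
    have hzsum : (∑ i, zv i) = 0 := by
      have h1 : (∑ i, zv i) = (n:ℝ) • gb - ∑ i, g i := by
        rw [hzv]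
        simp only []
        rw [Finset.sum_sub_distrib, Finset.sum_const, Finset.card_univ, Fintype.card_fin,
          ← Nat.cast_smul_eq_nsmul ℝ]
      rw [h1, hsgb, sub_self]
    have hk := hkey xc yv zv hzsum
    simp only [hQ, hF, hG] at hk
    have e5 : (∑ i, f i (xc i)) = ∑ i, f i c := by rw [hxc]
    have e3 : ‖xc‖^2 = (n:ℝ) * ‖c‖^2 := by
      rw [PiLp.norm_sq_eq_of_L2, hxc]
      simp [Finset.sum_const, Finset.card_univ]
    have e2 : ‖yv + zv‖^2 = (n:ℝ) * ‖v‖^2 := by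
      have hyz : yv + zv = (WithLp.toLp 2 (fun _ => v) : Vec d n) := by
        refine PiLp.ext fun i => ?_
        rw [PiLp.add_apply, hyv, hzv]
        simp only [PiLp.toLp_apply]
        abel
      rw [hyz, PiLp.norm_sq_eq_of_L2]
      simp [Finset.sum_const, Finset.card_univ]
    have e1 : ⟪yv, xa⟫ = (∑ i, ⟪g i, xa i⟫) + (n:ℝ)*⟪v,xo⟫ - (n:ℝ)*⟪gb,xo⟫ := by
      rw [PiLp.inner_apply]
      have h1 : ∀ i : Fin n, ⟪yv i, xa i⟫ = ⟪g i, xa i⟫ + ⟪v - gb, xa i⟫ := by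
        intro i
        rw [hyv]
        simp only []
        rw [← inner_add_left]
        congr 1
        abel
      rw [Finset.sum_congr rfl (fun i _ => h1 i), Finset.sum_add_distrib, ← inner_sum, ← hsxa,
        real_inner_smul_right, inner_sub_left]
      ring
    have e4 : ⟪ya, xc⟫ = (n:ℝ) * ⟪u, c⟫ := by
      rw [PiLp.inner_apply, hxc]
      simp only []
      rw [← sum_inner, ← hsu, real_inner_smul_left]
    have i1 : (∑ i, f i xo) + (∑ i, ⟪g i, xa i⟫) - (n:ℝ)*⟪gb,xo⟫ ≤ ∑ i, f i (xa i) := by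
      have h2 : (∑ i, (f i xo + ⟪g i, xa i - xo⟫)) ≤ ∑ i, f i (xa i) :=
        Finset.sum_le_sum (fun i _ => hgsub i (xa i))
      have h3 : (∑ i, (f i xo + ⟪g i, xa i - xo⟫))
          = (∑ i, f i xo) + (∑ i, ⟪g i, xa i⟫) - (n:ℝ)*⟪gb,xo⟫ := by
        rw [Finset.sum_add_distrib]
        have h4 : ∀ i : Fin n, ⟪g i, xa i - xo⟫ = ⟪g i, xa i⟫ - ⟪g i, xo⟫ :=
          fun i => inner_sub_right _ _ _
        rw [Finset.sum_congr rfl (fun i _ => h4 i), Finset.sum_sub_distrib, ← sum_inner, ← hsgb,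
          real_inner_smul_left]
        ring
      linarith
    have i2 : (n:ℝ) * ‖xo‖^2 ≤ ‖xa‖^2 := by
      have h1 : ‖∑ i, xa i‖^2 ≤ (n:ℝ) * ∑ i, ‖xa i‖^2 := norm_sum_sq_le_card _
      have h2 : ‖(n:ℝ) • xo‖^2 = (n:ℝ)^2 * ‖xo‖^2 := by
        rw [norm_smul, mul_pow, Real.norm_eq_abs, sq_abs]
      rw [hsxa] at h2
      have h3 : ‖xa‖^2 = ∑ i, ‖xa i‖^2 := PiLp.norm_sq_eq_of_L2 _ _
      have h4 : (n:ℝ) * ((n:ℝ) * ‖xo‖^2) ≤ (n:ℝ) * ‖xa‖^2 := by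
        rw [h3]; linarith [h1, h2]
      exact (mul_le_mul_iff_right₀ hn0).mp h4
    have i3 : (n:ℝ) * ‖u‖^2 ≤ ‖ya + za‖^2 := by
      have h1 : ‖∑ i, (ya i + za i)‖^2 ≤ (n:ℝ) * ∑ i, ‖ya i + za i‖^2 := norm_sum_sq_le_card _
      have h2 : ∑ i, (ya i + za i) = (n:ℝ) • u := by
        rw [Finset.sum_add_distrib, hza, add_zero, hsu]
      have h3 : ‖ya + za‖^2 = ∑ i, ‖ya i + za i‖^2 := by
        rw [PiLp.norm_sq_eq_of_L2]
        exact Finset.sum_congr rfl (fun i _ => by rw [PiLp.add_apply])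
      have h4 : ‖(n:ℝ) • u‖^2 = (n:ℝ)^2 * ‖u‖^2 := by
        rw [norm_smul, mul_pow, Real.norm_eq_abs, sq_abs]
      rw [h2, h4] at h1
      have h5 : (n:ℝ) * ((n:ℝ) * ‖u‖^2) ≤ (n:ℝ) * ‖ya + za‖^2 := by
        rw [h3]; linarith [h1]
      exact (mul_le_mul_iff_right₀ hn0).mp h5
    have hvar : ∑ i, ‖g i - gb‖^2 ≤ (n:ℝ)*M^2 := variance_bound g gb M hsgb hgM
    have i4 : ‖yv‖^2 ≤ (n:ℝ)*M^2 + (n:ℝ)*‖v‖^2 := by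
      have h1 : ‖yv‖^2 = ∑ i, ‖g i - gb + v‖^2 := by
        rw [PiLp.norm_sq_eq_of_L2]
        try exact Finset.sum_congr rfl (fun i _ => by rw [hyv])
      have h2 : ∀ i : Fin n, ‖g i - gb + v‖^2 = ‖g i - gb‖^2 + 2*⟪g i - gb, v⟫ + ‖v‖^2 :=
        fun i => norm_add_sq_real _ _
      have h3 : ∑ i, ⟪g i - gb, v⟫ = 0 := by
        rw [← sum_inner]
        have h5 : ∑ i, (g i - gb) = 0 := by
          rw [Finset.sum_sub_distrib, Finset.sum_const, Finset.card_univ, Fintype.card_fin,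
            ← Nat.cast_smul_eq_nsmul ℝ, hsgb, sub_self]
        rw [h5, inner_zero_left]
      have h6 : ∑ i, ‖g i - gb + v‖^2
          = (∑ i, ‖g i - gb‖^2) + 2*(∑ i, ⟪g i - gb, v⟫) + (n:ℝ)*‖v‖^2 := by
        rw [Finset.sum_congr rfl (fun i _ => h2 i), Finset.sum_add_distrib,
          Finset.sum_add_distrib, Finset.sum_const, Finset.card_univ, Fintype.card_fin,
          nsmul_eq_mul, Finset.mul_sum]
      rw [h1, h6, h3]
      linarith
    have i5 : ‖zv‖^2 ≤ (n:ℝ)*M^2 := by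
      have h1 : ‖zv‖^2 = ∑ i, ‖g i - gb‖^2 := by
        rw [PiLp.norm_sq_eq_of_L2]
        refine Finset.sum_congr rfl (fun i _ => ?_)
        show ‖gb - g i‖^2 = ‖g i - gb‖^2
        rw [norm_sub_rev]
      rw [h1]; exact hvar
    have hJ : 0 ≤ (n:ℝ) * ((3/r/2)*‖u‖^2 + ⟪u,c⟫ + (r/6)*‖c‖^2) := by
      have h0 : (0:ℝ) ≤ (3/r/2) * ‖u + (r/3)•c‖^2 := by positivity
      have h1 : ‖u + (r/3)•c‖^2 = ‖u‖^2 + 2*((r/3)*⟪u,c⟫) + (r/3)^2*‖c‖^2 := by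
        have hsc2 : ‖((r/3):ℝ)•c‖^2 = (r/3)^2*‖c‖^2 := by
          rw [norm_smul, mul_pow, Real.norm_eq_abs, sq_abs]
        rw [norm_add_sq_real, real_inner_smul_right, hsc2]
      have h2 : (3/r/2) * (‖u‖^2 + 2*((r/3)*⟪u,c⟫) + (r/3)^2*‖c‖^2)
          = (3/r/2)*‖u‖^2 + ⟪u,c⟫ + (r/6)*‖c‖^2 := by
        field_simp
        ring
      rw [h1, h2] at h0
      exact mul_nonneg (le_of_lt hn0) h0
    have e6 : (n:ℝ) * p c = (∑ i, f i c) + (n:ℝ)*(r/2)*‖c‖^2 := by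
      rw [hp c]
      field_simp
    rw [e5, e3, e2, e1, e4] at hk
    have i2' : (2*r/3/2) * ((n:ℝ)*‖xo‖^2) ≤ (2*r/3/2) * ‖xa‖^2 :=
      mul_le_mul_of_nonneg_left i2 (by positivity)
    have i3' : (3/r/2) * ((n:ℝ)*‖u‖^2) ≤ (3/r/2) * ‖ya+za‖^2 :=
      mul_le_mul_of_nonneg_left i3 (by positivity)
    have i4' : (2/(K:ℝ)^2) * ((18/r)*‖yv‖^2)
        ≤ (2/(K:ℝ)^2) * ((18/r)*((n:ℝ)*M^2+(n:ℝ)*‖v‖^2)) := by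
      apply mul_le_mul_of_nonneg_left _ (by positivity)
      exact mul_le_mul_of_nonneg_left i4 (by positivity)
    have i5' : (2/(K:ℝ)^2) * ((45*χ^2/r)*‖zv‖^2)
        ≤ (2/(K:ℝ)^2) * ((45*χ^2/r)*((n:ℝ)*M^2)) := by
      apply mul_le_mul_of_nonneg_left _ (by positivity)
      exact mul_le_mul_of_nonneg_left i5 (by positivity)
    linarith [hk, i1, i2', i3', i4', i5', hJ, e6]
  -- strong convexity at the minimizer
  have hsc : ∀ x, (r/2) * ‖x - xstar‖^2 ≤ p x - p xstar := by
    intro x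
    have hkt : ∀ t:ℝ, 0 < t → t ≤ 1 →
        0 ≤ t * ((n:ℝ)⁻¹ * (∑ i, (f i x - f i xstar)) + r*⟪xstar, x - xstar⟫
          + t*((r/2)*‖x - xstar‖^2)) := by
      intro t htp ht1
      have hmin' := hmin (xstar + t • (x - xstar))
      rw [hp, hp] at hmin'
      have hnorm : ‖xstar + t•(x-xstar)‖^2
          = ‖xstar‖^2 + 2*(t*⟪xstar,x-xstar⟫) + t^2*‖x-xstar‖^2 := by
        have h2 : ‖t•(x-xstar)‖^2 = t^2*‖x-xstar‖^2 := by
          rw [norm_smul, mul_pow, Real.norm_eq_abs, sq_abs]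
        rw [norm_add_sq_real, real_inner_smul_right, h2]
      rw [hnorm] at hmin'
      have hcs : ∀ i : Fin n, f i (xstar + t•(x-xstar)) ≤ f i xstar + t*(f i x - f i xstar) := by
        intro i
        have hc := (hconv i).2 (Set.mem_univ xstar) (Set.mem_univ x)
          (by linarith : (0:ℝ) ≤ 1-t) (le_of_lt htp) (by ring)
        have harg : (1-t)•xstar + t•x = xstar + t•(x-xstar) := by
          rw [sub_smul, one_smul, smul_sub]; abel
        rw [harg] at hc
        simp only [smul_eq_mul] at hc
        linarith
      have hsum : (∑ i, f i (xstar + t•(x-xstar))) ≤ (∑ i, f i xstar)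
          + t * (∑ i, (f i x - f i xstar)) := by
        have h1 : (∑ i, f i (xstar + t•(x-xstar)))
            ≤ ∑ i, (f i xstar + t*(f i x - f i xstar)) :=
          Finset.sum_le_sum (fun i _ => hcs i)
        rw [Finset.sum_add_distrib, ← Finset.mul_sum] at h1
        exact h1
      have hscaled : (n:ℝ)⁻¹ * (∑ i, f i (xstar + t•(x-xstar)))
          ≤ (n:ℝ)⁻¹ * ((∑ i, f i xstar) + t * (∑ i, (f i x - f i xstar))) :=
        mul_le_mul_of_nonneg_left hsum (le_of_lt (inv_pos.2 hn0))
      linarith [hmin', hscaled]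
    have hA : 0 ≤ (n:ℝ)⁻¹ * (∑ i, (f i x - f i xstar)) + r*⟪xstar, x - xstar⟫ :=
      nonneg_of_forall_small _ ((r/2)*‖x - xstar‖^2) (by positivity) hkt
    rw [hp, hp]
    have hsplit : (n:ℝ)⁻¹ * (∑ i, (f i x - f i xstar))
        = (n:ℝ)⁻¹*(∑ i, f i x) - (n:ℝ)⁻¹*(∑ i, f i xstar) := by
      rw [Finset.sum_sub_distrib]; ring
    have hnormid : r*‖x - xstar‖^2 = r*‖x‖^2 - 2*(r*⟪x,xstar⟫) + r*‖xstar‖^2 := by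
      rw [norm_sub_sq_real]; ring
    have hinnerid : r*⟪xstar, x - xstar⟫ = r*⟪x,xstar⟫ - r*‖xstar‖^2 := by
      rw [inner_sub_right, real_inner_comm xstar x, real_inner_self_eq_norm_sq]; ring
    linarith [hA, hsplit, hnormid, hinnerid]
  -- bound on the minimizer
  have hxs2 : r^2 * ‖xstar‖^2 ≤ 4*M^2 := by
    have h0 := hmin 0
    rw [hp, hp] at h0
    simp only [norm_zero] at h0
    have hlip0 : ∀ i : Fin n, f i 0 - f i xstar ≤ M * ‖xstar‖ := by
      intro i
      have h1 := hlip i 0 xstar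
      have h2 : ‖(0:EuclideanSpace ℝ (Fin d)) - xstar‖ = ‖xstar‖ := by
        rw [zero_sub, norm_neg]
      rw [h2] at h1
      exact le_trans (le_abs_self _) h1
    have hsum : (∑ i, f i 0) - (∑ i, f i xstar) ≤ (n:ℝ) * (M * ‖xstar‖) := by
      have h3 := Finset.sum_le_sum (fun i (_ : i ∈ Finset.univ) => hlip0 i)
      rw [Finset.sum_sub_distrib, Finset.sum_const, Finset.card_univ, Fintype.card_fin,
        nsmul_eq_mul] at h3
      exact h3
    have hsum' : (n:ℝ)⁻¹*(∑ i, f i 0) - (n:ℝ)⁻¹*(∑ i, f i xstar) ≤ M * ‖xstar‖ := by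
      have h3 := mul_le_mul_of_nonneg_left hsum (le_of_lt (inv_pos.2 hn0))
      have h4 : (n:ℝ)⁻¹*((n:ℝ)*(M*‖xstar‖)) = M*‖xstar‖ := by field_simp
      linarith [h3, h4]
    have h5 : (r/2)*‖xstar‖^2 ≤ M*‖xstar‖ := by linarith [h0, hsum']
    exact sq_bound_aux r M ‖xstar‖ hr h5
  -- instantiation 2 (v = -(r/3) xo, c = xstar)
  have hB2 : p xo - p xstar ≤ (2/(K:ℝ)^2)*(r*‖xstar‖^2 + (18/r)*(M^2 + (r/3)^2*‖xo‖^2)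
      + (45*χ^2/r)*M^2) + 72*M^2/(r*K*T) := by
    have h := hmain ((-(r/3))•xo) xstar
    have ha : ⟪((-(r/3))•xo : EuclideanSpace ℝ (Fin d)), xo⟫ = -(r/3)*‖xo‖^2 := by
      rw [real_inner_smul_left, real_inner_self_eq_norm_sq]
    have hb : ‖((-(r/3))•xo : EuclideanSpace ℝ (Fin d))‖^2 = (r/3)^2*‖xo‖^2 := by
      rw [norm_smul, mul_pow, Real.norm_eq_abs, sq_abs]
      ring
    rw [ha, hb] at h
    have hnp : (n:ℝ)*(p xo - p xstar) = (∑ i, f i xo)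
        + (n:ℝ)*((2*r/3/2)*‖xo‖^2 - (-(r/3)*‖xo‖^2) - (3/r/2)*((r/3)^2*‖xo‖^2))
        - (n:ℝ)*p xstar := by
      rw [hp xo]
      field_simp
      ring
    have hRHS : (2/(K:ℝ)^2)*(r*((n:ℝ)*‖xstar‖^2) + (18/r)*((n:ℝ)*M^2 + (n:ℝ)*((r/3)^2*‖xo‖^2))
        + (45*χ^2/r)*((n:ℝ)*M^2)) + 72*n*M^2/(r*K*T)
        = (n:ℝ)*((2/(K:ℝ)^2)*(r*‖xstar‖^2 + (18/r)*(M^2 + (r/3)^2*‖xo‖^2)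
        + (45*χ^2/r)*M^2) + 72*M^2/(r*K*T)) := by
      field_simp
    have h2 : (n:ℝ)*(p xo - p xstar) ≤ (n:ℝ)*((2/(K:ℝ)^2)*(r*‖xstar‖^2
        + (18/r)*(M^2 + (r/3)^2*‖xo‖^2) + (45*χ^2/r)*M^2) + 72*M^2/(r*K*T)) := by
      linarith [h, hnp, hRHS]
    exact (mul_le_mul_iff_right₀ hn0).mp h2
  -- instantiation 1 (v = -(r/3) xstar, c = xstar)
  have hB1 : (p xo - p xstar) - (r/6)*‖xo - xstar‖^2
      ≤ (2/(K:ℝ)^2)*(r*‖xstar‖^2 + (18/r)*(M^2 + (r/3)^2*‖xstar‖^2)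
      + (45*χ^2/r)*M^2) + 72*M^2/(r*K*T) := by
    have h := hmain ((-(r/3))•xstar) xstar
    have ha : ⟪((-(r/3))•xstar : EuclideanSpace ℝ (Fin d)), xo⟫ = -(r/3)*⟪xstar,xo⟫ :=
      real_inner_smul_left _ _ _
    have hb : ‖((-(r/3))•xstar : EuclideanSpace ℝ (Fin d))‖^2 = (r/3)^2*‖xstar‖^2 := by
      rw [norm_smul, mul_pow, Real.norm_eq_abs, sq_abs]
      ring
    rw [ha, hb] at h
    have hnp : (n:ℝ)*((p xo - p xstar) - (r/6)*‖xo - xstar‖^2) = (∑ i, f i xo)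
        + (n:ℝ)*((2*r/3/2)*‖xo‖^2 - (-(r/3)*⟪xstar,xo⟫) - (3/r/2)*((r/3)^2*‖xstar‖^2))
        - (n:ℝ)*p xstar := by
      rw [hp xo, norm_sub_sq_real, real_inner_comm xo xstar]
      field_simp
      ring
    have hRHS : (2/(K:ℝ)^2)*(r*((n:ℝ)*‖xstar‖^2) + (18/r)*((n:ℝ)*M^2
        + (n:ℝ)*((r/3)^2*‖xstar‖^2)) + (45*χ^2/r)*((n:ℝ)*M^2)) + 72*n*M^2/(r*K*T)
        = (n:ℝ)*((2/(K:ℝ)^2)*(r*‖xstar‖^2 + (18/r)*(M^2 + (r/3)^2*‖xstar‖^2)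
        + (45*χ^2/r)*M^2) + 72*M^2/(r*K*T)) := by
      field_simp
    have h2 : (n:ℝ)*((p xo - p xstar) - (r/6)*‖xo - xstar‖^2)
        ≤ (n:ℝ)*((2/(K:ℝ)^2)*(r*‖xstar‖^2 + (18/r)*(M^2 + (r/3)^2*‖xstar‖^2)
        + (45*χ^2/r)*M^2) + 72*M^2/(r*K*T)) := by
      linarith [h, hnp, hRHS]
    exact (mul_le_mul_iff_right₀ hn0).mp h2
  -- scalar endgame
  have hD0 : (r/2)*‖xo - xstar‖^2 ≤ p xo - p xstar := hsc xo
  have hO : ‖xo‖^2 ≤ 2*‖xo - xstar‖^2 + 2*‖xstar‖^2 := by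
    have h1 := norm_add_sq_le_two (xo - xstar) xstar
    rw [sub_add_cancel] at h1
    exact h1
  exact endgame_aux r χ M (K:ℝ) (T:ℝ) (p xo - p xstar) (‖xo - xstar‖^2) (‖xstar‖^2)
    (‖xo‖^2) hr hχ2 hk1 ht1 (sq_nonneg M) (by positivity) (by positivity) (by positivity)
    hB2 hB1 hD0 hxs2 hO

end
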